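/- For every u = (i, j) ∈ I_{RC}, the element A^{RC;u} := (d_R/|N_C|) Σ_{m∈N_C} conj(R^{jj}(m)) A^{q_i m q_i⁻¹} is a self-adjoint idempotent (a projector) in 𝒜, and it commutes with B^{c_i}. -/

import Mathlib

/-- In a unital complex *-algebra `𝒜` carrying a realization of the quantum
double relations via elements `A^h`, `B^g` (h, g ∈ G), for every `u = (i, j) ∈ I_{RC}` the
element `A^{RC;u} = (d_R/|N_C|) Σ_{m∈N_C} conj(R^{jj}(m)) A^{q_i m q_i⁻¹}` is a self-adjoint
idempotent (a projector) commuting with `B^{c_i}`. -/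
theorem quantum_double_ARCu_projector
    {G : Type*} [Group G] [Fintype G] [DecidableEq G]
    {𝒜 : Type*} [Ring 𝒜] [Algebra ℂ 𝒜] [StarRing 𝒜] [StarModule ℂ 𝒜]
    (A B : G → 𝒜)
    (hA1 : A 1 = 1)
    (hAmul : ∀ h h' : G, A h * A h' = A (h * h'))
    (hAstar : ∀ h : G, star (A h) = A h⁻¹)
    (hBstar : ∀ g : G, star (B g) = B g)
    (hBmul : ∀ g g' : G, B g * B g' = if g = g' then B g else 0)
    (hBsum : ∑ g : G, B g = 1)
    (hAB : ∀ h g : G, A h * B g = B (h * g * h⁻¹) * A h)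
    -- the conjugacy class `C = {c_1, …, c_{|C|}}`, representative `r_C`, iterators `q_i`
    (r : G) (nC : ℕ) (c : Fin nC → G) (q : Fin nC → G)
    (hcinj : Function.Injective c)
    (hcclass : ∀ g : G, IsConj r g ↔ ∃ i, c i = g)
    (hq : ∀ i, c i = q i * r * (q i)⁻¹)
    -- the centralizer `N_C` of `r_C` in `G`
    (N : Subgroup G) [Fintype N] (hN : N = Subgroup.centralizer {r})
    -- an irreducible unitary matrix representation `R` of `N_C` of dimension `d_R`
    (dR : ℕ) (hdR : 0 < dR)
    (R : N →* Matrix (Fin dR) (Fin dR) ℂ)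
    (hRunitary : ∀ m, R m * star (R m) = 1)
    (hRirr : ∀ M : Matrix (Fin dR) (Fin dR) ℂ,
      (∀ m, R m * M = M * R m) → ∃ z : ℂ, M = z • (1 : Matrix (Fin dR) (Fin dR) ℂ))
    -- the element `A^{RC;u}` for `u = (i, j)`
    (i : Fin nC) (j : Fin dR) (ARCu : 𝒜)
    (hARCu : ARCu = ((dR : ℂ) / (Fintype.card N : ℂ)) •
      ∑ m : N, star (R m j j) • A (q i * (m : G) * (q i)⁻¹)) :
    IsSelfAdjoint ARCu ∧ ARCu * ARCu = ARCu ∧ Commute ARCu (B (c i)) := by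
  have hdRC : (dR : ℂ) ≠ 0 := Nat.cast_ne_zero.mpr hdR.ne'
  have hNC : ((Fintype.card N : ℂ)) ≠ 0 := Nat.cast_ne_zero.mpr Fintype.card_ne_zero
  -- inverse representation is the star
  have hRinv : ∀ m : N, R m⁻¹ = star (R m) := by
    intro m
    have h2 : R m⁻¹ * R m = 1 := by rw [← map_mul, inv_mul_cancel, map_one]
    calc R m⁻¹ = R m⁻¹ * (R m * star (R m)) := by rw [hRunitary, mul_one]
      _ = star (R m) := by rw [← mul_assoc, h2, one_mul]
  have hRinv' : ∀ (m : N) (a b : Fin dR), R m⁻¹ a b = star (R m b a) := by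
    intro m a b; rw [hRinv m, Matrix.star_apply]
  -- Schur averaging
  have key : ∀ X : Matrix (Fin dR) (Fin dR) ℂ,
      ∑ m : N, R m * X * R m⁻¹
        = (((Fintype.card N : ℂ) / dR) * Matrix.trace X) • (1 : Matrix (Fin dR) (Fin dR) ℂ) := by
    intro X
    set M : Matrix (Fin dR) (Fin dR) ℂ := ∑ m : N, R m * X * R m⁻¹ with hM
    have hcomm : ∀ n : N, R n * M = M * R n := by
      intro n
      rw [hM, Finset.mul_sum, Finset.sum_mul]
      refine Fintype.sum_equiv (Equiv.mulLeft n) _ _ ?_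
      intro m
      have h1 : R ((n * m)⁻¹) * R n = R m⁻¹ := by
        rw [← map_mul]; congr 1; group
      show R n * (R m * X * R m⁻¹) = R (n * m) * X * R (n * m)⁻¹ * R n
      rw [mul_assoc (R (n * m) * X), h1, map_mul, mul_assoc, mul_assoc, mul_assoc]
    obtain ⟨z, hz⟩ := hRirr M hcomm
    have htr : Matrix.trace M = (Fintype.card N : ℂ) * Matrix.trace X := by
      rw [hM, Matrix.trace_sum]
      have h3 : ∀ m : N, Matrix.trace (R m * X * R m⁻¹) = Matrix.trace X := by
        intro m
        rw [Matrix.trace_mul_comm, ← mul_assoc, ← map_mul, inv_mul_cancel, map_one, one_mul]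
      simp [h3, Finset.sum_const, Finset.card_univ]
    have htr2 : Matrix.trace M = z * dR := by
      rw [hz]; simp [Matrix.trace_smul, Matrix.trace_one, mul_comm]
    have hzval : z = (Fintype.card N : ℂ) / dR * Matrix.trace X := by
      field_simp
      linear_combination htr2.symm.trans htr
    rw [hz, hzval]
  -- entrywise Schur orthogonality needed below
  have schur : ∀ k : Fin dR, ∑ m : N, R m j j * R m⁻¹ j k
      = (Fintype.card N : ℂ) / dR * (if j = k then 1 else 0) := by
    intro k
    have h := key (Matrix.single j j (1:ℂ))
    have h2 := congrArg (fun M : Matrix (Fin dR) (Fin dR) ℂ => M j k) h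
    simp only [Matrix.sum_apply, Matrix.smul_apply, Matrix.one_apply, smul_eq_mul] at h2
    have h3 : ∀ m : N, (R m * Matrix.single j j (1:ℂ) * R m⁻¹) j k
        = R m j j * R m⁻¹ j k := by
      intro m
      rw [Matrix.mul_apply]
      rw [Finset.sum_eq_single j]
      · simp
      · intro b _ hb
        rw [Matrix.mul_single_apply_of_ne _ _ _ _ _ hb, zero_mul]
      · simp
    rw [Finset.sum_congr rfl (fun m _ => h3 m)] at h2
    rw [h2]
    have htrE : Matrix.trace (Matrix.single j j (1:ℂ)) = 1 := by
      simp [Matrix.trace, Matrix.diag, Matrix.single]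
    rw [htrE, mul_one]
  -- notation
  set φ : N → G := fun m => q i * (m : G) * (q i)⁻¹ with hφ
  have hφmul : ∀ m m' : N, φ m * φ m' = φ (m * m') := by
    intro m m'; simp only [hφ, Subgroup.coe_mul]; group
  have hφinv : ∀ m : N, (φ m)⁻¹ = φ m⁻¹ := by
    intro m; simp only [hφ, InvMemClass.coe_inv]; group
  set α : ℂ := (dR : ℂ) / (Fintype.card N : ℂ) with hα
  have hαstar : star α = α := by
    simp [hα, Complex.star_def, ← Complex.ofReal_natCast]
  have hARCu' : ARCu = α • ∑ m : N, star (R m j j) • A (φ m) := hARCu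
  refine ⟨?_, ?_, ?_⟩
  · -- self-adjoint
    rw [IsSelfAdjoint, hARCu', star_smul, star_sum, hαstar]
    congr 1
    rw [← Equiv.sum_comp (Equiv.inv N)]
    refine Finset.sum_congr rfl ?_
    intro m _
    simp only [Equiv.inv_apply]
    rw [star_smul, star_star, hAstar, hφinv, inv_inv, hRinv' m j j]
  · -- idempotent
    rw [hARCu']
    rw [smul_mul_smul_comm]
    rw [Finset.sum_mul_sum]
    have hterm : ∀ m m' : N,
        (star (R m j j) • A (φ m)) * (star (R m' j j) • A (φ m'))
          = (star (R m j j * R m' j j)) • A (φ (m * m')) := by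
      intro m m'
      rw [smul_mul_smul_comm, hAmul, hφmul, star_mul']
    rw [Finset.sum_congr rfl (fun m _ => Finset.sum_congr rfl (fun m' _ => hterm m m'))]
    have hreindex : ∀ m : N, ∑ m' : N, (star (R m j j * R m' j j)) • A (φ (m * m'))
        = ∑ n : N, (star (R m j j * R (m⁻¹ * n) j j)) • A (φ n) := by
      intro m
      rw [← Equiv.sum_comp (Equiv.mulLeft m⁻¹)]
      refine Finset.sum_congr rfl ?_
      intro n _
      simp only [Equiv.coe_mulLeft]
      rw [mul_inv_cancel_left]
    rw [Finset.sum_congr rfl (fun m _ => hreindex m), Finset.sum_comm]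
    have hinner : ∀ n : N, (∑ m : N, star (R m j j * R (m⁻¹ * n) j j))
        = ((Fintype.card N : ℂ) / dR) * star (R n j j) := by
      intro n
      rw [← star_sum]
      have hcalc : ∑ m : N, R m j j * R (m⁻¹ * n) j j
          = (Fintype.card N : ℂ) / dR * R n j j := by
        have hexp : ∀ m : N, R m j j * R (m⁻¹ * n) j j
            = ∑ k : Fin dR, R m j j * (R m⁻¹ j k * R n k j) := by
          intro m
          rw [map_mul, Matrix.mul_apply, Finset.mul_sum]
        rw [Finset.sum_congr rfl fun m _ => hexp m, Finset.sum_comm]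
        have hk : ∀ k : Fin dR, ∑ m : N, R m j j * (R m⁻¹ j k * R n k j)
            = ((Fintype.card N : ℂ) / dR * (if j = k then 1 else 0)) * R n k j := by
          intro k
          rw [← schur k, Finset.sum_mul]
          exact Finset.sum_congr rfl fun m _ => by ring
        rw [Finset.sum_congr rfl fun k _ => hk k]
        simp
      rw [hcalc, star_mul']
      congr 1
      simp [Complex.star_def, ← Complex.ofReal_natCast]
    rw [Finset.sum_congr rfl (fun n _ => by rw [← Finset.sum_smul, hinner n])]
    rw [Finset.smul_sum, Finset.smul_sum]
    refine Finset.sum_congr rfl ?_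
    intro n _
    rw [smul_smul, smul_smul]
    congr 1
    rw [hα]
    field_simp
  · -- commutes with B (c i)
    have hcommB : ∀ m : N, Commute (A (φ m)) (B (c i)) := by
      intro m
      have hm : r * (m : G) = (m : G) * r := by
        have hmem : (m : G) ∈ Subgroup.centralizer {r} := hN ▸ m.2
        exact Subgroup.mem_centralizer_iff.mp hmem r rfl
      have h1 : φ m * c i * (φ m)⁻¹ = c i := by
        rw [hq i]
        have h0 : (m : G) * r * (m : G)⁻¹ = r := by rw [← hm]; group
        calc φ m * (q i * r * (q i)⁻¹) * (φ m)⁻¹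
            = q i * ((m : G) * r * (m : G)⁻¹) * (q i)⁻¹ := by simp only [hφ]; group
          _ = q i * r * (q i)⁻¹ := by rw [h0]
      unfold Commute SemiconjBy
      rw [hAB, h1]
    rw [hARCu']
    refine Commute.smul_left ?_ α
    refine Commute.sum_left _ _ _ ?_
    intro m _
    exact Commute.smul_left (hcommB m) _
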